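/- For every special braid b (in any B_n^+), the G∞^sp-sequence from b is finite: there exists a natural number t such that b{1}^sp{2}^sp⋯{t}^sp = 1. -/

import Mathlib

namespace BraidInf

/-! ### The positive braid monoid B∞⁺ on infinitely many strands.
Letters are natural numbers: letter `i` stands for the Artin generator σ_{i+1}. -/

def braidRel : FreeMonoid ℕ → FreeMonoid ℕ → Prop := fun u v =>
  (∃ i j, i + 2 ≤ j ∧ u = FreeMonoid.of i * FreeMonoid.of j ∧
    v = FreeMonoid.of j * FreeMonoid.of i) ∨
  (∃ i, u = FreeMonoid.of i * FreeMonoid.of (i + 1) * FreeMonoid.of i ∧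
    v = FreeMonoid.of (i + 1) * FreeMonoid.of i * FreeMonoid.of (i + 1))

def braidCon : Con (FreeMonoid ℕ) := conGen braidRel

/-- The positive braid monoid B∞⁺ (the union of all the B_n⁺). -/
abbrev BIM := braidCon.Quotient

/-- The element of B∞⁺ represented by a word (letter `i` is σ_{i+1}). -/
def mkw (w : List ℕ) : BIM := braidCon.mk' (FreeMonoid.ofList w)

/-! ### The braid group B∞ with the same presentation. -/

def grpRels : Set (FreeGroup ℕ) :=
  { r | (∃ i j, i + 2 ≤ j ∧
          r = FreeGroup.of i * FreeGroup.of j * (FreeGroup.of j * FreeGroup.of i)⁻¹) ∨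
        (∃ i, r = FreeGroup.of i * FreeGroup.of (i + 1) * FreeGroup.of i *
          (FreeGroup.of (i + 1) * FreeGroup.of i * FreeGroup.of (i + 1))⁻¹) }

abbrev BIG := PresentedGroup grpRels

def g (i : ℕ) : BIG := PresentedGroup.of i

theorem grp_rel (u v : FreeGroup ℕ) (h : (u * v⁻¹) ∈ grpRels) :
    (QuotientGroup.mk u : BIG) = QuotientGroup.mk v := by
  rw [QuotientGroup.eq]
  have hmem : u * v⁻¹ ∈ Subgroup.normalClosure grpRels := Subgroup.subset_normalClosure h
  have h2 := (Subgroup.normalClosure_normal (s := grpRels)).conj_mem _ hmem u⁻¹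
  simp only [inv_inv] at h2
  have h3 : u⁻¹ * (u * v⁻¹) * u = (u⁻¹ * v)⁻¹ := by group
  rw [h3] at h2
  exact (Subgroup.inv_mem_iff _).mp h2

/-- The canonical embedding of B∞⁺ into B∞. -/
def ι : BIM →* BIG :=
  Con.lift _ (FreeMonoid.lift fun i => g i) (by
    apply Con.conGen_le.mpr
    rintro u v (⟨i, j, hij, hu, hv⟩ | ⟨i, hu, hv⟩) <;> subst hu <;> subst hv <;>
      rw [Con.ker_rel] <;> simp only [map_mul, FreeMonoid.lift_eval_of]
    · exact grp_rel _ _ (Or.inl ⟨i, j, hij, rfl⟩)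
    · exact grp_rel _ _ (Or.inr ⟨i, rfl⟩))

/-! ### The braid order -/

/-- Evaluation in B∞ of a signed word: a letter `(i, true)` is σ_{i+1} and
`(i, false)` is σ_{i+1}⁻¹. -/
def evalSW (w : List (ℕ × Bool)) : BIG :=
  (w.map fun l => if l.2 then g l.1 else (g l.1)⁻¹).prod

/-- A signed word is σ-positive if the generator of highest occurring index occurs,
and occurs only positively. -/
def SigmaPos (w : List (ℕ × Bool)) : Prop :=
  ∃ i : ℕ, (i, true) ∈ w ∧ (i, false) ∉ w ∧ ∀ l ∈ w, l.1 ≤ i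

/-- The braid order on B∞, restricted to B∞⁺. -/
def blt (a b : BIM) : Prop := ∃ w, SigmaPos w ∧ evalSW w = (ι a)⁻¹ * ι b

/-! ### Skew products and special braids -/

/-- The separating word σ1σ2²⋯σ_{n-2}²σ_{n-1} (as a word, for n ≥ 3). -/
def sepWord (n : ℕ) : List ℕ :=
  [0] ++ ((List.range (n - 3)).flatMap fun j => [j + 1, j + 1]) ++ [n - 2]

/-- The flip automorphism φ_n (σ_i ↦ σ_{n-i}) at the level of words. -/
def flipWord (n : ℕ) (w : List ℕ) : List ℕ := w.map fun i => n - 2 - i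

/-- φ̃_n(b) = σ1σ2²⋯σ_{n-2}²σ_{n-1} · φ_n(b) · σ_{n-1}σ_{n-2}²⋯σ2²σ1, on words. -/
def phiTilde (n : ℕ) (w : List ℕ) : List ℕ :=
  sepWord n ++ flipWord n w ++ (sepWord n).reverse

/-- The skew product ⟨b_p, …, b_1⟩_{n,p} of the words `ws = [b_p, …, b_1]`:
the product where φ̃_n is applied to every second factor counting from the right,
the rightmost factor being unmodified. -/
def skewProd (n : ℕ) (ws : List (List ℕ)) : List ℕ :=
  ((ws.reverse.zipIdx.map fun q => if q.2 % 2 = 1 then phiTilde n q.1 else q.1).reverse).flatten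

/-- Special n-braids (as their canonical words): every word σ1^e is 2-special;
for n ≥ 3, the trivial word is n-special, and so is any skew product
⟨b_p, …, b_1⟩_{n,p} of special (n−1)-braids with b_p nontrivial. -/
inductive IsSpecial : ℕ → List ℕ → Prop
  | of2 (e : ℕ) : IsSpecial 2 (List.replicate e 0)
  | triv (n : ℕ) (h : 3 ≤ n) : IsSpecial n []
  | skew (n : ℕ) (h : 3 ≤ n) (ws : List (List ℕ)) (hne : ws ≠ [])
      (hsp : ∀ w ∈ ws, IsSpecial (n - 1) w) (hhd : ws.head! ≠ []) :
      IsSpecial n (skewProd n ws)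

/-- θ_{n,t} = ⟨σ1, 1, …, 1⟩_{n,t} (skew product with t components, the leftmost
being σ1 and the others trivial); at level n = 2 the skew product degenerates and
θ_{2,t} = σ1^t. -/
def theta (n t : ℕ) : List ℕ :=
  if n ≤ 2 then List.replicate t 0
  else skewProd n ([[0]] ++ List.replicate (t - 1) [])

/-- The operation b ↦ b{t}^sp of Definition 4.8, as a relation on the canonical
words of special braids. In the cases for n ≥ 3, the source is
b = ⟨b_p, …, b_{r+1}, b_r, 1, …, 1⟩_{n,p} with `bs = [b_p, …, b_{r+1}]`, b_r the
rightmost nontrivial component, and b'_r = b_r{t}^sp. -/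
inductive SpStep : ℕ → List ℕ → ℕ → List ℕ → Prop
  | base (e t : ℕ) :
      SpStep 2 (List.replicate (e + 1) 0) t (List.replicate e 0)
  | case1 (n : ℕ) (h : 3 ≤ n) (bs : List (List ℕ)) (br br' : List ℕ) (r t : ℕ)
      (hr : 1 ≤ r)
      (hbs : ∀ w ∈ bs, IsSpecial (n - 1) w) (hbr : IsSpecial (n - 1) br)
      (hbrne : br ≠ []) (hhd : (bs ++ [br]).head! ≠ [])
      (hsub : SpStep (n - 1) br t br')
      (hcase : r = 1 ∨ br ≠ br' ++ [0]) :
      SpStep n (skewProd n (bs ++ [br] ++ List.replicate (r - 1) [])) t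
        (skewProd n (bs ++ [br'] ++ List.replicate (r - 1) []))
  | case2 (n : ℕ) (h : 3 ≤ n) (bs : List (List ℕ)) (br br' : List ℕ) (r t : ℕ)
      (hr : 2 ≤ r)
      (hbs : ∀ w ∈ bs, IsSpecial (n - 1) w) (hbr : IsSpecial (n - 1) br)
      (hbrne : br ≠ []) (hhd : (bs ++ [br]).head! ≠ [])
      (hsub : SpStep (n - 1) br t br')
      (heq : br = br' ++ [0]) (hcond : br' ≠ [] ∨ bs ≠ []) :
      SpStep n (skewProd n (bs ++ [br] ++ List.replicate (r - 1) [])) t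
        (skewProd n (bs ++ [br', theta (n - 1) t] ++ List.replicate (r - 2) []))
  | case3 (n : ℕ) (h : 3 ≤ n) (r t : ℕ) (hr : 2 ≤ r) :
      SpStep n (skewProd n ([[0]] ++ List.replicate (r - 1) [])) t
        (skewProd n ([theta (n - 1) t] ++ List.replicate (r - 2) []))


/-! ### Auxiliary development -/

inductive T : Type where
  | leaf (e : ℕ) : T
  | node (l : List T) : T
deriving Inhabited

def wordT : ℕ → T → List ℕ
  | 0, _ => []
  | 1, _ => []
  | 2, .leaf e => List.replicate e 0
  | 2, .node _ => []
  | (n+3), .node l => skewProd (n+3) (l.map (fun x => wordT (n+2) x))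
  | (_+3), .leaf _ => []

theorem sepWord_ne_nil (n : ℕ) : sepWord n ≠ [] := by simp [sepWord]

theorem phiTilde_ne_nil (n : ℕ) (w : List ℕ) : phiTilde n w ≠ [] := by
  simp [phiTilde, sepWord_ne_nil]

theorem skewProd_nil (n : ℕ) : skewProd n [] = [] := rfl

theorem skewProd_singleton (n : ℕ) (w : List ℕ) : skewProd n [w] = w := by
  simp [skewProd, List.zipIdx]

theorem skewProd_ne_nil (n : ℕ) (ws : List (List ℕ)) (h : 2 ≤ ws.length) :
    skewProd n ws ≠ [] := by
  intro hc
  rw [skewProd, List.flatten_eq_nil_iff] at hc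
  have h1 : 1 < ws.reverse.length := by simp; omega
  have hmem : (ws.reverse[1], 1) ∈ ws.reverse.zipIdx := by
    have := List.getElem_zipIdx (l := ws.reverse) (j := 0) (i := 1) (by simpa using h1)
    rw [zero_add] at this
    rw [← this]
    exact List.getElem_mem _
  have : phiTilde n (ws.reverse[1]) ∈
      (ws.reverse.zipIdx.map fun q => if q.2 % 2 = 1 then phiTilde n q.1 else q.1) := by
    refine List.mem_map.2 ⟨_, hmem, ?_⟩
    simp
  exact phiTilde_ne_nil n _ (hc _ (by simpa using this))
/-- Trees that represent the trivial braid but may be structurally degenerate. -/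
inductive TrivE : T → Prop
  | leaf0 : TrivE (.leaf 0)
  | node_nil : TrivE (.node [])
  | node_single (x : T) (h : TrivE x) : TrivE (.node [x])

/-- Validity of a tree as (the structure of) a special braid at level `n`. -/
inductive Valid : ℕ → T → Prop
  | trivE (n : ℕ) (x : T) (h : TrivE x) : Valid n x
  | leaf (e : ℕ) : Valid 2 (.leaf e)
  | node (n : ℕ) (l : List T) (h : 3 ≤ n)
      (hl : ∀ x ∈ l, Valid (n-1) x)
      (hhd : l ≠ [] → wordT (n-1) l.head! ≠ []) : Valid n (.node l)

theorem wordT_node (n : ℕ) (l : List T) :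
    wordT (n+3) (.node l) = skewProd (n+3) (l.map (fun x => wordT (n+2) x)) := rfl

theorem wordT_node_nil (n : ℕ) : wordT n (.node []) = [] := by
  match n with
  | 0 => rfl
  | 1 => rfl
  | 2 => rfl
  | (m+3) => rfl

theorem wordT_node_single (n : ℕ) (hn : 3 ≤ n) (x : T) :
    wordT n (.node [x]) = wordT (n-1) x := by
  obtain ⟨m, rfl⟩ : ∃ m, n = m + 3 := ⟨n - 3, by omega⟩
  rw [wordT_node]
  simp [skewProd_singleton]

theorem trivE_word (x : T) (h : TrivE x) (n : ℕ) : wordT n x = [] := by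
  induction h generalizing n with
  | leaf0 => match n with
    | 0 => rfl | 1 => rfl | 2 => rfl | (m+3) => rfl
  | node_nil => exact wordT_node_nil n
  | node_single x hx ih =>
    match n with
    | 0 => rfl | 1 => rfl | 2 => rfl
    | (m+3) => rw [wordT_node_single (m+3) (by omega)]; exact ih _

/-- A node word is empty only when the list is empty or a single trivial-word child. -/
theorem word_node_eq_nil (n : ℕ) (hn : 3 ≤ n) (l : List T)
    (h : wordT n (.node l) = []) :
    l = [] ∨ ∃ x, l = [x] ∧ wordT (n-1) x = [] := by
  obtain ⟨m, rfl⟩ : ∃ m, n = m + 3 := ⟨n - 3, by omega⟩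
  match l with
  | [] => exact Or.inl rfl
  | [x] =>
    right; exact ⟨x, rfl, by rwa [wordT_node_single (m+3) (by omega)] at h⟩
  | x :: y :: l =>
    exfalso
    rw [wordT_node] at h
    exact skewProd_ne_nil _ _ (by simp) h

theorem valid_trivword_trivE (n : ℕ) (b : T) (hn : 2 ≤ n) (h : Valid n b)
    (hw : wordT n b = []) : TrivE b := by
  induction h with
  | trivE n x h => exact h
  | leaf e =>
    have he : List.replicate e 0 = [] := hw
    have : e = 0 := by simpa using he
    subst this; exact TrivE.leaf0
  | node n l h3 hl hhd ih =>
    rcases word_node_eq_nil n h3 l hw with rfl | ⟨x, rfl, hx⟩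
    · exact TrivE.node_nil
    · exact absurd hx (hhd (by simp))
theorem isSpecial_nil (n : ℕ) (hn : 2 ≤ n) : IsSpecial n [] := by
  rcases Nat.lt_or_ge n 3 with h | h
  · have : n = 2 := by omega
    subst this
    simpa using IsSpecial.of2 0
  · exact IsSpecial.triv n h

theorem head!_map {α β : Type*} [Inhabited α] [Inhabited β] (f : α → β) (l : List α)
    (hl : l ≠ []) : (l.map f).head! = f l.head! := by
  match l with
  | [] => exact absurd rfl hl
  | a :: l => rfl

theorem valid_isSpecial (n : ℕ) (b : T) (hn : 2 ≤ n) (h : Valid n b) :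
    IsSpecial n (wordT n b) := by
  induction h with
  | trivE n x h => rw [trivE_word x h]; exact isSpecial_nil n hn
  | leaf e => exact IsSpecial.of2 e
  | node n l h3 hl hhd ih =>
    rcases List.eq_nil_or_concat l with rfl | _
    · rw [wordT_node_nil]; exact IsSpecial.triv n h3
    · have hlne : l ≠ [] := by rintro rfl; simp_all
      obtain ⟨m, rfl⟩ : ∃ m, n = m + 3 := ⟨n - 3, by omega⟩
      rw [wordT_node]
      refine IsSpecial.skew (m+3) h3 _ (by simpa using hlne) ?_ ?_
      · intro w hw
        rcases List.mem_map.1 hw with ⟨x, hx, rfl⟩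
        exact ih x hx (by omega)
      · rw [head!_map _ _ hlne]
        exact hhd hlne

theorem isSpecial_tree (n : ℕ) (w : List ℕ) (h : IsSpecial n w) :
    ∃ b : T, Valid n b ∧ wordT n b = w := by
  induction h with
  | of2 e => exact ⟨.leaf e, Valid.leaf e, rfl⟩
  | triv n h => exact ⟨.node [], Valid.trivE _ _ TrivE.node_nil, wordT_node_nil n⟩
  | skew n h3 ws hne hsp hhd ih =>
    obtain ⟨m, rfl⟩ : ∃ m, n = m + 3 := ⟨n - 3, by omega⟩
    have : ∃ l : List T, (∀ x ∈ l, Valid (m+2) x) ∧ l.map (fun x => wordT (m+2) x) = ws := by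
      clear hne hhd hsp
      induction ws with
      | nil => exact ⟨[], by simp, by simp⟩
      | cons w ws ihws =>
        obtain ⟨l, hl1, hl2⟩ := ihws (fun w hw => ih w (List.mem_cons_of_mem _ hw))
        obtain ⟨b, hb1, hb2⟩ := ih w (List.mem_cons_self)
        refine ⟨b :: l, ?_, by simp [hl2]; exact hb2⟩
        intro x hx
        rcases List.mem_cons.1 hx with rfl | hx
        · exact hb1
        · exact hl1 x hx
    obtain ⟨l, hl1, hl2⟩ := this
    have hlne : l ≠ [] := by rintro rfl; simp at hl2; exact hne hl2
    refine ⟨.node l, Valid.node _ _ h3 (by simpa using hl1) ?_, by rw [wordT_node, hl2]⟩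
    intro _
    have := head!_map (fun x => wordT (m+2) x) l hlne
    rw [hl2] at this
    simpa [this] using hhd

/-- The tree for the braid σ1 at each level. -/
def oneT : ℕ → T
  | 0 => .leaf 1
  | 1 => .leaf 1
  | 2 => .leaf 1
  | (n+3) => .node [oneT (n+2)]

theorem wordT_oneT (n : ℕ) (hn : 2 ≤ n) : wordT n (oneT n) = [0] := by
  obtain ⟨m, rfl⟩ : ∃ m, n = m + 2 := ⟨n - 2, by omega⟩
  induction m with
  | zero => rfl
  | succ k ih =>
    show wordT (k+3) (.node [oneT (k+2)]) = [0]
    rw [wordT_node_single (k+3) (by omega)]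
    exact ih (by omega)

theorem valid_oneT (n : ℕ) (hn : 2 ≤ n) : Valid n (oneT n) := by
  obtain ⟨m, rfl⟩ : ∃ m, n = m + 2 := ⟨n - 2, by omega⟩
  induction m with
  | zero => exact Valid.leaf 1
  | succ k ih =>
    refine Valid.node _ _ (by omega) ?_ ?_
    · intro x hx
      simp at hx
      subst hx
      simpa using ih (by omega)
    · intro _
      show wordT (k+2) ([oneT (k+2)]).head! ≠ []
      simp [wordT_oneT (k+2) (by omega)]

/-- The tree for θ_{n,t}. -/
def thetaT (n t : ℕ) : T :=
  if n ≤ 2 then .leaf t else .node (oneT (n-1) :: List.replicate (t-1) (.node []))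

theorem wordT_thetaT (n t : ℕ) (hn : 2 ≤ n) : wordT n (thetaT n t) = theta n t := by
  rcases Nat.lt_or_ge n 3 with h | h
  · have : n = 2 := by omega
    subst this
    rfl
  · obtain ⟨m, rfl⟩ : ∃ m, n = m + 3 := ⟨n - 3, by omega⟩
    rw [thetaT, if_neg (by omega), theta, if_neg (by omega), wordT_node]
    congr 1
    simp only [List.map_cons, List.map_replicate]
    rw [show (m+3-1) = m+2 from rfl, wordT_oneT (m+2) (by omega), wordT_node_nil]
    rfl

theorem valid_thetaT (n t : ℕ) (hn : 2 ≤ n) : Valid n (thetaT n t) := by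
  rcases Nat.lt_or_ge n 3 with h | h
  · have : n = 2 := by omega
    subst this
    exact Valid.leaf t
  · rw [thetaT, if_neg (by omega)]
    refine Valid.node _ _ h ?_ ?_
    · intro x hx
      rcases List.mem_cons.1 hx with rfl | hx
      · exact valid_oneT _ (by omega)
      · rw [List.eq_of_mem_replicate hx]
        exact Valid.trivE _ _ TrivE.node_nil
    · intro _
      show wordT (n-1) (oneT (n-1)) ≠ []
      simp [wordT_oneT (n-1) (by omega)]

theorem wordT_thetaT_ne_nil (n t : ℕ) (hn : 2 ≤ n) (ht : 1 ≤ t) :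
    wordT n (thetaT n t) ≠ [] := by
  rw [wordT_thetaT n t hn, theta]
  rcases Nat.lt_or_ge n 3 with h | h
  · rw [if_pos (by omega)]
    simp
    omega
  · rw [if_neg (by omega)]
    match t with
    | 1 => simp [skewProd_singleton]
    | (t+2) => exact skewProd_ne_nil _ _ (by simp)
/-! ### Ordinal measures -/

open Ordinal in
/-- The bounding ordinal for level-`n+2` special braids. -/
noncomputable def kap (n : ℕ) : Ordinal.{0} := omega0 ^ (omega0 ^ (n : Ordinal))

theorem kap_pos (n : ℕ) : 0 < kap n :=
  Ordinal.opow_pos _ Ordinal.omega0_pos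

theorem omega0_le_kap (n : ℕ) : Ordinal.omega0 ≤ kap n := by
  simpa [kap] using Ordinal.opow_le_opow_right Ordinal.omega0_pos
    (Order.one_le_iff_pos.2 (Ordinal.opow_pos (n : Ordinal.{0}) Ordinal.omega0_pos))

theorem add_lt_kap {a b : Ordinal} {n : ℕ} (ha : a < kap n) (hb : b < kap n) :
    a + b < kap n :=
  Ordinal.principal_add_omega0_opow _ ha hb

theorem add_two_le_kap {a : Ordinal} {n : ℕ} (ha : a < kap n) : a + 2 ≤ kap n := by
  refine le_of_lt (add_lt_kap ha ?_)
  exact lt_of_lt_of_le (by exact_mod_cast Ordinal.nat_lt_omega0 2) (omega0_le_kap n)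

theorem kap_pow_lt_kap_succ (n k : ℕ) : (kap n) ^ k < kap (n+1) := by
  rw [kap, ← Ordinal.opow_natCast, ← Ordinal.opow_mul, kap]
  refine Ordinal.opow_lt_opow_iff_right Ordinal.one_lt_omega0 |>.2 ?_
  calc Ordinal.omega0 ^ (n : Ordinal) * (k : Ordinal)
      < Ordinal.omega0 ^ (n : Ordinal) * Ordinal.omega0 :=
        mul_lt_mul_of_pos_left (Ordinal.nat_lt_omega0 k)
          (Ordinal.opow_pos _ Ordinal.omega0_pos)
    _ = Ordinal.omega0 ^ ((n : Ordinal) + 1) := (Ordinal.opow_succ _ _).symm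
    _ = Ordinal.omega0 ^ (((n+1 : ℕ)) : Ordinal) := by
        rw [Nat.cast_add, Nat.cast_one]

/-- The measure of a list of component trees: `Σ κ^(position from right) * (μ(b)+1)`. -/
noncomputable def muL (κ : Ordinal.{0}) (f : T → Ordinal.{0}) : List T → Ordinal.{0}
  | [] => 0
  | x :: xs => κ ^ xs.length * (f x + 1) + muL κ f xs

/-- The ordinal measure of a tree at level `n`. -/
noncomputable def muT : ℕ → T → Ordinal.{0}
  | 0, _ => 0
  | 1, _ => 0
  | 2, .leaf e => (e : Ordinal)
  | 2, .node _ => 0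
  | (n+3), .node l => muL (kap n) (fun x => muT (n+2) x) l
  | (_+3), .leaf _ => 0

theorem muL_lt_pow (κ : Ordinal) (f : T → Ordinal) (l : List T)
    (h : ∀ x ∈ l, f x + 2 ≤ κ) : muL κ f l < κ ^ l.length := by
  induction l with
  | nil => simp [muL]
  | cons x xs ih =>
    have h2 : f x + 2 ≤ κ := h x (List.mem_cons_self)
    have ih' := ih (fun y hy => h y (List.mem_cons_of_mem _ hy))
    calc κ ^ xs.length * (f x + 1) + muL κ f xs
        < κ ^ xs.length * (f x + 1) + κ ^ xs.length := add_lt_add_right ih' _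
      _ = κ ^ xs.length * (f x + 2) := by
          have e2 : f x + 2 = (f x + 1) + 1 := by rw [add_assoc, one_add_one_eq_two]
          conv_rhs => rw [e2, mul_add_one]
      _ ≤ κ ^ xs.length * κ := mul_le_mul_right h2 _
      _ = κ ^ (x :: xs).length := by rw [List.length_cons, pow_succ]

theorem pow_le_muL (κ : Ordinal) (f : T → Ordinal) (x : T) (xs : List T) :
    κ ^ xs.length ≤ muL κ f (x :: xs) := by
  calc κ ^ xs.length = κ ^ xs.length * 1 := (mul_one _).symm
    _ ≤ κ ^ xs.length * (f x + 1) := by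
        refine mul_le_mul_right ?_ _
        exact le_add_self
    _ ≤ _ := le_self_add

theorem muT_trivE (x : T) (h : TrivE x) (n : ℕ) : muT n x < Ordinal.omega0 := by
  induction h generalizing n with
  | leaf0 =>
    match n with
    | 0 => exact Ordinal.omega0_pos
    | 1 => exact Ordinal.omega0_pos
    | 2 => exact Ordinal.nat_lt_omega0 0
    | (m+3) => exact Ordinal.omega0_pos
  | node_nil =>
    match n with
    | 0 => exact Ordinal.omega0_pos
    | 1 => exact Ordinal.omega0_pos
    | 2 => exact Ordinal.omega0_pos
    | (m+3) => exact Ordinal.omega0_pos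
  | node_single y hy ih =>
    match n with
    | 0 => exact Ordinal.omega0_pos
    | 1 => exact Ordinal.omega0_pos
    | 2 => exact Ordinal.omega0_pos
    | (m+3) =>
      show muL (kap m) (fun x => muT (m+2) x) [y] < Ordinal.omega0
      have : muL (kap m) (fun x => muT (m+2) x) [y] = muT (m+2) y + 1 := by
        simp [muL]
      rw [this]
      rw [Ordinal.add_one_eq_succ]
      exact Ordinal.isSuccLimit_omega0.succ_lt (ih (m+2))

theorem muT_lt_kap (n : ℕ) (b : T) (h : Valid n b) : muT n b < kap (n-2) := by
  induction h with
  | trivE n x hx => exact lt_of_lt_of_le (muT_trivE x hx n) (omega0_le_kap _)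
  | leaf e => exact lt_of_lt_of_le (Ordinal.nat_lt_omega0 e) (omega0_le_kap _)
  | node n l h3 hl hhd ih =>
    obtain ⟨m, rfl⟩ : ∃ m, n = m + 3 := ⟨n - 3, by omega⟩
    show muL (kap m) (fun x => muT (m+2) x) l < kap (m+3-2)
    have hb : ∀ x ∈ l, muT (m+2) x + 2 ≤ kap m := by
      intro x hx
      exact add_two_le_kap (by simpa using ih x hx)
    exact lt_trans (muL_lt_pow _ _ _ hb) (by simpa using kap_pow_lt_kap_succ m l.length)
theorem muL_append_lt (κ : Ordinal) (f : T → Ordinal) (xs : List T) {u v : List T}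
    (hlen : u.length = v.length) (h : muL κ f u < muL κ f v) :
    muL κ f (xs ++ u) < muL κ f (xs ++ v) := by
  induction xs with
  | nil => simpa using h
  | cons x xs ih =>
    show κ ^ (xs ++ u).length * (f x + 1) + muL κ f (xs ++ u)
        < κ ^ (xs ++ v).length * (f x + 1) + muL κ f (xs ++ v)
    rw [List.length_append, List.length_append, hlen]
    exact add_lt_add_right ih _

theorem muL_head_lt (κ : Ordinal) (f : T → Ordinal) {d' br : T} {u v : List T}
    (h1 : f d' < f br) (h2 : muL κ f u < κ ^ u.length) (hlen : u.length = v.length) :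
    muL κ f (d' :: u) < muL κ f (br :: v) := by
  have e2 : f d' + 2 = (f d' + 1) + 1 := by rw [add_assoc, one_add_one_eq_two]
  calc κ ^ u.length * (f d' + 1) + muL κ f u
      < κ ^ u.length * (f d' + 1) + κ ^ u.length := add_lt_add_right h2 _
    _ = κ ^ u.length * (f d' + 2) := by conv_rhs => rw [e2, mul_add_one]
    _ ≤ κ ^ u.length * (f br + 1) := by
        refine mul_le_mul_right ?_ _
        rw [e2]
        exact add_le_add_left (Order.add_one_le_iff.2 h1) 1
    _ = κ ^ v.length * (f br + 1) := by rw [hlen]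
    _ ≤ κ ^ v.length * (f br + 1) + muL κ f v := le_self_add

theorem head!_append {α : Type*} [Inhabited α] (l l' : List α) (h : l ≠ []) :
    (l ++ l').head! = l.head! := by
  match l with
  | [] => exact absurd rfl h
  | a :: l => rfl

/-- Predicate: the tree represents the trivial braid (at level `m`). -/
def pTriv (m : ℕ) (x : T) : Bool := (wordT m x).isEmpty

/-- The operation `b ↦ b{t}^sp` at the level of trees. -/
def stepT : ℕ → ℕ → T → T
  | 0, _, b => b
  | 1, _, b => b
  | 2, _, .leaf e => .leaf (e-1)
  | 2, _, b => b
  | (_+3), _, .leaf e => .leaf e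
  | (n+3), t, .node l =>
    match (l.reverse).dropWhile (pTriv (n+2)) with
    | [] => .node l
    | br :: bsrev =>
      let bs := bsrev.reverse
      let trivs := ((l.reverse).takeWhile (pTriv (n+2))).reverse
      let d' := stepT (n+2) t br
      if wordT (n+2) br = wordT (n+2) d' ++ [0] ∧ trivs.isEmpty = false then
        if bs.isEmpty ∧ wordT (n+2) d' = [] then .node (thetaT (n+2) t :: trivs.tail)
        else .node (bs ++ d' :: thetaT (n+2) t :: trivs.tail)
      else .node (bs ++ d' :: trivs)

theorem stepT_node (n t : ℕ) (l : List T) :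
    stepT (n+3) t (.node l) =
      match (l.reverse).dropWhile (pTriv (n+2)) with
      | [] => .node l
      | br :: bsrev =>
        let bs := bsrev.reverse
        let trivs := ((l.reverse).takeWhile (pTriv (n+2))).reverse
        let d' := stepT (n+2) t br
        if wordT (n+2) br = wordT (n+2) d' ++ [0] ∧ trivs.isEmpty = false then
          if bs.isEmpty ∧ wordT (n+2) d' = [] then .node (thetaT (n+2) t :: trivs.tail)
          else .node (bs ++ d' :: thetaT (n+2) t :: trivs.tail)
        else .node (bs ++ d' :: trivs)
  := by rw [stepT]

theorem muT_node (n : ℕ) (l : List T) :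
    muT (n+3) (.node l) = muL (kap n) (fun x => muT (n+2) x) l := rfl
theorem stepT_node_cons (n t : ℕ) (l : List T) (br : T) (bsrev : List T)
    (hdw : (l.reverse).dropWhile (pTriv (n+2)) = br :: bsrev)
    (bs trivs : List T) (d' : T) (hbs : bs = bsrev.reverse)
    (htr : trivs = ((l.reverse).takeWhile (pTriv (n+2))).reverse)
    (hd' : d' = stepT (n+2) t br) :
    stepT (n+3) t (.node l) =
      if wordT (n+2) br = wordT (n+2) d' ++ [0] ∧ trivs.isEmpty = false then
        if bs.isEmpty ∧ wordT (n+2) d' = [] then .node (thetaT (n+2) t :: trivs.tail)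
        else .node (bs ++ d' :: thetaT (n+2) t :: trivs.tail)
      else .node (bs ++ d' :: trivs) := by
  subst hbs; subst htr; subst hd'
  rw [stepT_node, hdw]

theorem main_step : ∀ (k t : ℕ) (b : T), 1 ≤ t → Valid (k+2) b → wordT (k+2) b ≠ [] →
    SpStep (k+2) (wordT (k+2) b) t (wordT (k+2) (stepT (k+2) t b)) ∧
    Valid (k+2) (stepT (k+2) t b) ∧
    muT (k+2) (stepT (k+2) t b) < muT (k+2) b ∧
    (wordT (k+2) (stepT (k+2) t b) = [] → wordT (k+2) b = [0]) := by
  intro k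
  induction k with
  | zero =>
    intro t b ht hv hw
    cases hv with
    | trivE n x hx => exact absurd (trivE_word _ hx 2) hw
    | leaf e =>
      match e with
      | 0 => exact absurd rfl hw
      | (e+1) =>
        refine ⟨SpStep.base e t, Valid.leaf e, ?_, ?_⟩
        · show ((e : ℕ) : Ordinal) < ((e+1 : ℕ) : Ordinal)
          exact_mod_cast Nat.lt_succ_self e
        · intro h
          have he : e = 0 := by
            have h2 : List.replicate e 0 = [] := h
            simpa using h2
          subst he
          rfl
    | node n l h3 hl hhd => exact absurd h3 (by omega)
  | succ k IH =>
    intro t b ht hv hw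
    cases hv with
    | trivE n x hx => exact absurd (trivE_word _ hx _) hw
    | node n l h3 hl hhd =>
    simp only [show k+1+2 = k+3 from rfl]
    have hl' : ∀ x ∈ l, Valid (k+2) x := hl
    have hhd2 : l ≠ [] → wordT (k+2) l.head! ≠ [] := hhd
    have hw' : wordT (k+3) (T.node l) ≠ [] := hw
    clear hl hhd hw
    have hlne : l ≠ [] := by rintro rfl; exact hw' (wordT_node_nil _)
    cases hdw : (l.reverse).dropWhile (pTriv (k+2)) with
    | nil =>
      exfalso
      have hall := List.dropWhile_eq_nil_iff.1 hdw l.head! (by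
        simpa using List.head!_mem_self hlne)
      simp only [pTriv] at hall
      rw [List.isEmpty_iff] at hall
      exact hhd2 hlne hall
    | cons br bsrev =>
      have hbrw : wordT (k+2) br ≠ [] := by
        have h0 := List.head?_dropWhile_not (pTriv (k+2)) l.reverse
        rw [hdw] at h0
        simp only [List.head?_cons] at h0
        simp only [pTriv] at h0
        rw [List.isEmpty_eq_false_iff] at h0
        simpa using h0
      set bs := bsrev.reverse with hbs
      set trivs := ((l.reverse).takeWhile (pTriv (k+2))).reverse with htrv
      set d' := stepT (k+2) t br with hd'def
      set kk := trivs.length with hkk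
      have hsplit : l = bs ++ br :: trivs := by
        have h1 := List.takeWhile_append_dropWhile (p := pTriv (k+2)) (l := l.reverse)
        rw [hdw] at h1
        have h2 := congrArg List.reverse h1
        simpa using h2.symm
      have htrivmem : ∀ x ∈ trivs, wordT (k+2) x = [] := by
        intro x hx
        have hx' : x ∈ (l.reverse).takeWhile (pTriv (k+2)) := by
          rw [htrv] at hx; simpa using hx
        have h2 := List.mem_takeWhile_imp hx'
        simp only [pTriv] at h2
        rwa [List.isEmpty_iff] at h2
      have hbrmem : br ∈ l := by rw [hsplit]; simp
      have hmem_of : ∀ x, x ∈ bs ∨ x ∈ trivs → x ∈ l := by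
        rintro x (hx | hx) <;> rw [hsplit] <;> simp [hx]
      obtain ⟨ha, hb, hc, hd⟩ := IH t br ht (hl' br hbrmem) hbrw
      rw [← hd'def] at ha hb hc hd
      set brW := wordT (k+2) br with hbrW
      set d'W := wordT (k+2) d' with hd'W
      set bsW := bs.map (fun x => wordT (k+2) x) with hbsW
      have htrivmap : trivs.map (fun x => wordT (k+2) x) = List.replicate kk [] := by
        refine List.eq_replicate_iff.2 ⟨by simp [hkk], ?_⟩
        intro w hw'
        rcases List.mem_map.1 hw' with ⟨x, hx, rfl⟩
        exact htrivmem x hx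
      have hmap : l.map (fun x => wordT (k+2) x) = bsW ++ brW :: List.replicate kk [] := by
        rw [hsplit, List.map_append, List.map_cons, htrivmap]
      have hhd' : (bsW ++ [brW]).head! ≠ [] := by
        by_cases hbsnil : bs = []
        · rw [hbsW, hbsnil]
          simpa using hbrw
        · obtain ⟨b0, bs', hbse⟩ := List.exists_cons_of_ne_nil hbsnil
          have hh : l.head! = b0 := by rw [hsplit, hbse]; rfl
          have h2 := hhd2 hlne
          rw [hh] at h2
          rw [hbsW, hbse]
          simpa using h2
      have hbsSpec : ∀ w ∈ bsW, IsSpecial (k+2) w := by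
        intro w hw'
        rcases List.mem_map.1 (hbsW ▸ hw') with ⟨x, hx, rfl⟩
        exact valid_isSpecial _ _ (by omega) (hl' x (hmem_of x (Or.inl hx)))
      have hbrSpec : IsSpecial (k+2) brW := valid_isSpecial _ _ (by omega) (hl' br hbrmem)
      have htrivbound : ∀ x ∈ trivs, muT (k+2) x + 2 ≤ kap k := fun x hx =>
        add_two_le_kap (muT_lt_kap (k+2) x (hl' x (hmem_of x (Or.inr hx))))
      rw [stepT_node_cons k t l br bsrev hdw bs trivs d' hbs htrv hd'def]
      by_cases hc1 : brW = d'W ++ [0] ∧ trivs.isEmpty = false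
      · by_cases hc2 : bs.isEmpty ∧ d'W = []
        · -- case 3
          rw [if_pos hc1, if_pos hc2]
          have hbsnil : bs = [] := List.isEmpty_iff.1 hc2.1
          have hbsWnil : bsW = [] := by rw [hbsW, hbsnil]; rfl
          have hbrW0 : brW = [0] := by rw [hc1.1, hc2.2]; rfl
          have htrne : trivs ≠ [] := List.isEmpty_eq_false_iff.1 hc1.2
          have hkk1 : 1 ≤ kk := by
            rw [hkk]; exact List.length_pos_iff.2 htrne
          have httlmap : trivs.tail.map (fun x => wordT (k+2) x) =
              List.replicate (kk-1) [] := by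
            refine List.eq_replicate_iff.2 ⟨by simp [hkk], ?_⟩
            intro w hw'
            rcases List.mem_map.1 hw' with ⟨x, hx, rfl⟩
            exact htrivmem x ((List.tail_sublist trivs).subset hx)
          have hwtgt : wordT (k+3) (T.node (thetaT (k+2) t :: trivs.tail)) =
              skewProd (k+3) (theta (k+2) t :: List.replicate (kk-1) []) := by
            rw [wordT_node]
            congr 1
            rw [List.map_cons, httlmap, wordT_thetaT _ _ (by omega)]
          refine ⟨?_, ?_, ?_, ?_⟩
          · rw [wordT_node, hmap, hwtgt]
            have hstep := SpStep.case3 (k+3) (by omega) (kk+1) t (by omega)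
            have harith : kk + 1 - 2 = kk - 1 := by omega
            rw [harith] at hstep
            simpa [hbsWnil, hbrW0] using hstep
          · refine Valid.node _ _ (by omega) ?_ ?_
            · intro x hx
              rcases List.mem_cons.1 hx with rfl | hx
              · exact valid_thetaT _ _ (by omega)
              · exact hl' x (hmem_of x (Or.inr ((List.tail_sublist trivs).subset hx)))
            · intro _
              show wordT (k+2) (thetaT (k+2) t) ≠ []
              exact wordT_thetaT_ne_nil _ _ (by omega) ht
          · rw [muT_node, muT_node, hsplit, hbsnil, List.nil_append]
            have hlen : (thetaT (k+2) t :: trivs.tail).length = trivs.length := by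
              simp [List.length_tail]; omega
            calc muL (kap k) (fun x => muT (k+2) x) (thetaT (k+2) t :: trivs.tail)
                < kap k ^ (thetaT (k+2) t :: trivs.tail).length := by
                  refine muL_lt_pow _ _ _ ?_
                  intro x hx
                  rcases List.mem_cons.1 hx with rfl | hx
                  · exact add_two_le_kap (muT_lt_kap (k+2) _ (valid_thetaT _ _ (by omega)))
                  · exact htrivbound x ((List.tail_sublist trivs).subset hx)
              _ = kap k ^ (br :: trivs).length.pred := by rw [hlen]; rfl
              _ ≤ muL (kap k) (fun x => muT (k+2) x) (br :: trivs) := pow_le_muL _ _ _ _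
          · intro h0
            exfalso
            rcases word_node_eq_nil (k+3) (by omega) _ h0 with hcon | ⟨x, hx1, hx2⟩
            · simp at hcon
            · injection hx1 with h1 h2
              rw [← h1] at hx2
              exact wordT_thetaT_ne_nil _ _ (by omega) ht hx2
        · -- case 2
          rw [if_pos hc1, if_neg hc2]
          have heq : brW = d'W ++ [0] := hc1.1
          have htrne : trivs ≠ [] := List.isEmpty_eq_false_iff.1 hc1.2
          have hkk1 : 1 ≤ kk := by
            rw [hkk]; exact List.length_pos_iff.2 htrne
          have httlmap : trivs.tail.map (fun x => wordT (k+2) x) =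
              List.replicate (kk-1) [] := by
            refine List.eq_replicate_iff.2 ⟨by simp [hkk], ?_⟩
            intro w hw'
            rcases List.mem_map.1 hw' with ⟨x, hx, rfl⟩
            exact htrivmem x ((List.tail_sublist trivs).subset hx)
          have hcond : d'W ≠ [] ∨ bsW ≠ [] := by
            by_cases hbsnil : bs = []
            · left
              intro hcon
              exact hc2 ⟨List.isEmpty_iff.2 hbsnil, hcon⟩
            · right
              rw [hbsW]
              simpa using hbsnil
          have hwtgt : wordT (k+3) (T.node (bs ++ d' :: thetaT (k+2) t :: trivs.tail)) =
              skewProd (k+3) (bsW ++ d'W :: theta (k+2) t :: List.replicate (kk-1) []) := by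
            rw [wordT_node]
            congr 1
            rw [List.map_append, List.map_cons, List.map_cons, httlmap,
              wordT_thetaT _ _ (by omega)]
          refine ⟨?_, ?_, ?_, ?_⟩
          · rw [wordT_node, hmap, hwtgt]
            have hstep := SpStep.case2 (k+3) (by omega) bsW brW d'W (kk+1) t (by omega)
              hbsSpec hbrSpec hbrw hhd' ha heq hcond
            have harith : kk + 1 - 2 = kk - 1 := by omega
            rw [harith] at hstep
            simpa using hstep
          · refine Valid.node _ _ (by omega) ?_ ?_
            · intro x hx
              rcases List.mem_append.1 hx with hx | hx
              · exact hl' x (hmem_of x (Or.inl hx))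
              · rcases List.mem_cons.1 hx with rfl | hx
                · exact hb
                · rcases List.mem_cons.1 hx with rfl | hx
                  · exact valid_thetaT _ _ (by omega)
                  · exact hl' x (hmem_of x (Or.inr ((List.tail_sublist trivs).subset hx)))
            · intro _
              by_cases hbsnil : bs = []
              · have hd'ne : d'W ≠ [] := by
                  intro hcon
                  exact hc2 ⟨List.isEmpty_iff.2 hbsnil, hcon⟩
                rw [hbsnil, List.nil_append]
                exact hd'ne
              · obtain ⟨b0, bs', hbse⟩ := List.exists_cons_of_ne_nil hbsnil
                have hh : l.head! = b0 := by rw [hsplit, hbse]; rfl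
                have h2 := hhd2 hlne
                rw [hh] at h2
                rw [hbse]
                exact h2
          · rw [muT_node, muT_node, hsplit]
            refine muL_append_lt _ _ _ (by simp [List.length_tail]; omega) ?_
            refine muL_head_lt _ _ hc ?_ (by simp [List.length_tail]; omega)
            refine muL_lt_pow _ _ _ ?_
            intro x hx
            rcases List.mem_cons.1 hx with rfl | hx
            · exact add_two_le_kap (muT_lt_kap (k+2) _ (valid_thetaT _ _ (by omega)))
            · exact htrivbound x ((List.tail_sublist trivs).subset hx)
          · intro h0
            exfalso
            rcases word_node_eq_nil (k+3) (by omega) _ h0 with hcon | ⟨x, hx1, hx2⟩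
            · simp at hcon
            · have hL := congrArg List.length hx1
              simp at hL
              omega
      · -- case 1
        rw [if_neg hc1]
        have hwtgt : wordT (k+3) (T.node (bs ++ d' :: trivs)) =
            skewProd (k+3) (bsW ++ d'W :: List.replicate kk []) := by
          rw [wordT_node]
          congr 1
          rw [List.map_append, List.map_cons, htrivmap]
        refine ⟨?_, ?_, ?_, ?_⟩
        · rw [wordT_node, hmap, hwtgt]
          have hcase : kk + 1 = 1 ∨ brW ≠ d'W ++ [0] := by
            by_cases hk0 : kk = 0
            · left; omega
            · right
              intro hcon
              refine hc1 ⟨hcon, ?_⟩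
              rw [List.isEmpty_eq_false_iff]
              intro hcon2
              rw [hcon2] at hkk
              simp at hkk
              omega
          have hstep := SpStep.case1 (k+3) (by omega) bsW brW d'W (kk+1) t (by omega)
            hbsSpec hbrSpec hbrw hhd' ha hcase
          simpa using hstep
        · by_cases hbsnil : bs = []
          · by_cases hd'w : d'W = []
            · have hbr0 : brW = [0] := hd hd'w
              have htrnil : trivs = [] := by
                by_contra hcon
                refine hc1 ⟨?_, List.isEmpty_eq_false_iff.2 hcon⟩
                rw [hbr0, hd'w]
                rfl
              rw [hbsnil, htrnil, List.nil_append]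
              exact Valid.trivE _ _ (TrivE.node_single _
                (valid_trivword_trivE (k+2) d' (by omega) hb hd'w))
            · refine Valid.node _ _ (by omega) ?_ ?_
              · intro x hx
                rcases List.mem_append.1 hx with hx | hx
                · exact hl' x (hmem_of x (Or.inl hx))
                · rcases List.mem_cons.1 hx with rfl | hx
                  · exact hb
                  · exact hl' x (hmem_of x (Or.inr hx))
              · intro _
                rw [hbsnil, List.nil_append]
                exact hd'w
          · refine Valid.node _ _ (by omega) ?_ ?_
            · intro x hx
              rcases List.mem_append.1 hx with hx | hx
              · exact hl' x (hmem_of x (Or.inl hx))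
              · rcases List.mem_cons.1 hx with rfl | hx
                · exact hb
                · exact hl' x (hmem_of x (Or.inr hx))
            · intro _
              obtain ⟨b0, bs', hbse⟩ := List.exists_cons_of_ne_nil hbsnil
              have hh : l.head! = b0 := by rw [hsplit, hbse]; rfl
              have h2 := hhd2 hlne
              rw [hh] at h2
              rw [hbse]
              exact h2
        · rw [muT_node, muT_node, hsplit]
          refine muL_append_lt _ _ _ rfl ?_
          exact muL_head_lt _ _ hc (muL_lt_pow _ _ _ htrivbound) rfl
        · intro h0
          rcases word_node_eq_nil (k+3) (by omega) _ h0 with hcon | ⟨x, hx1, hx2⟩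
          · simp at hcon
          · rcases List.eq_nil_or_concat bs with hbsnil | ⟨ys, y, hbse⟩
            · rw [hbsnil, List.nil_append] at hx1
              injection hx1 with h1 h2
              rw [← h1] at hx2
              have hbr0 : brW = [0] := hd hx2
              rw [hsplit, hbsnil, h2, List.nil_append]
              rw [wordT_node_single (k+3) (by omega)]
              exact hbr0
            · exfalso
              rw [hbse] at hx1
              have hL := congrArg List.length hx1
              simp at hL
              omega
theorem seq_exists (k : ℕ) : ∀ (o : Ordinal.{0}) (b : T), muT (k+2) b = o → Valid (k+2) b →
    ∀ t0 : ℕ,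
    ∃ (kn : ℕ) (c : ℕ → List ℕ), c 0 = wordT (k+2) b ∧
      (∀ s, s < kn → SpStep (k+2) (c s) (t0 + s + 1) (c (s+1))) ∧ c kn = [] := by
  intro o
  induction o using Ordinal.induction with
  | h o IH =>
    intro b ho hv t0
    by_cases hw : wordT (k+2) b = []
    · exact ⟨0, fun _ => wordT (k+2) b, rfl, fun s hs => absurd hs (by omega), hw⟩
    · obtain ⟨ha, hb, hcmu, _⟩ := main_step k (t0+1) b (by omega) hv hw
      obtain ⟨kn, c, hc0, hcs, hce⟩ :=
        IH (muT (k+2) (stepT (k+2) (t0+1) b)) (ho ▸ hcmu) _ rfl hb (t0+1)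
      refine ⟨kn+1, fun s => if s = 0 then wordT (k+2) b else c (s-1), by simp, ?_, by
        simp [hce]⟩
      intro s hs
      match s with
      | 0 =>
        simpa [hc0] using ha
      | (s+1) =>
        have hstep := hcs s (by omega)
        have he : t0 + (s+1) + 1 = t0 + 1 + s + 1 := by omega
        simpa [he] using hstep

/-- Proposition 4.10: for every special braid b, the G∞^sp-sequence from b is finite,
i.e. there is a t with b{1}^sp{2}^sp⋯{t}^sp = 1. -/
theorem spseq_reaches_one (n : ℕ) (hn : 2 ≤ n) (w : List ℕ) (hw : IsSpecial n w) :
    ∃ (t : ℕ) (c : ℕ → List ℕ), c 0 = w ∧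
      (∀ s, s < t → SpStep n (c s) (s + 1) (c (s + 1))) ∧ mkw (c t) = 1 := by
  obtain ⟨k, rfl⟩ : ∃ k, n = k + 2 := ⟨n - 2, by omega⟩
  obtain ⟨b, hv, hwb⟩ := isSpecial_tree _ _ hw
  obtain ⟨kn, c, hc0, hcs, hce⟩ := seq_exists k (muT (k+2) b) b rfl hv 0
  refine ⟨kn, c, by rw [hc0, hwb], ?_, by rw [hce]; simp [mkw]⟩
  intro s hs
  simpa using hcs s hs

end BraidInf
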